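/- Identification of the marginal counterfactual mean under treatment k over the entire trial population via the extrapolation assumption (treated-arm part of Theorem 2): under assumptions (P-k-all), (I-k-all), (C-k-all) and (Extra), one has 𝔼[Yᵏ] = Σ_{(w,e): 𝒫(W=w,E=e)>0} μ_oc(k,w,e) · p(w,e), where μ_oc(k,w,e) := 𝔼[Y | A=k, W=w, E=e, V=1]. -/

import Mathlib

open MeasureTheory Finset

/-- Conditional expectation given an event: `𝔼[X | B] := 𝔼[X · 1_B] / 𝒫(B)`. -/
noncomputable def condMean {Ω : Type*} [MeasurableSpace Ω] (P : Measure Ω)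
    (X : Ω → ℝ) (B : Set Ω) : ℝ :=
  (∫ ω, B.indicator X ω ∂P) / (P B).toReal

/-- Identification of the marginal counterfactual mean under treatment `k` over the entire
trial population via the extrapolation assumption (treated-arm part of Theorem 2): under
(P-k-all), (I-k-all), (C-k-all) and (Extra),
`𝔼[Yᵏ] = Σ_{(w,e) : 𝒫(W=w,E=e)>0} μ_oc(k,w,e) · p(w,e)`,
where `μ_oc(k,w,e) := 𝔼[Y | A=k, W=w, E=e, V=1]`. -/
theorem marginal_mean_treated_identification_extrapolation
    {Ω : Type*} [MeasurableSpace Ω] (P : Measure Ω) [IsProbabilityMeasure P]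
    {𝓦 ℰ : Type*} [Fintype 𝓦] [Fintype ℰ] [Nonempty 𝓦] [Nonempty ℰ]
    [MeasurableSpace 𝓦] [MeasurableSingletonClass 𝓦]
    [MeasurableSpace ℰ] [MeasurableSingletonClass ℰ]
    (W : Ω → 𝓦) (E : Ω → ℰ) (V : Ω → Fin 2) {K : ℕ} (A : Ω → Fin (K + 1))
    (k : Fin (K + 1)) (Y Yk Y0 : Ω → ℝ)
    (hW : Measurable W) (hE : Measurable E) (hV : Measurable V) (hA : Measurable A)
    (hY : Integrable Y P) (hYk : Integrable Yk P) (hY0 : Integrable Y0 P)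
    -- (P-k-all) positivity for arm k among all units
    (hPkall : ∀ (w : 𝓦) (e : ℰ), 0 < P {ω | W ω = w ∧ E ω = e} →
      0 < P {ω | A ω = k ∧ W ω = w ∧ E ω = e ∧ V ω = 1})
    -- (I-k-all) weak A-ignorability for arm k among all units
    (hIkall : ∀ (w : 𝓦) (e : ℰ), 0 < P {ω | A ω = k ∧ W ω = w ∧ E ω = e} →
      condMean P Yk {ω | W ω = w ∧ E ω = e} =
        condMean P Yk {ω | A ω = k ∧ W ω = w ∧ E ω = e})
    -- (C-k-all) consistency in mean for arm k among all units
    (hCkall : ∀ (w : 𝓦) (e : ℰ), 0 < P {ω | A ω = k ∧ W ω = w ∧ E ω = e} →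
      condMean P Yk {ω | A ω = k ∧ W ω = w ∧ E ω = e} =
        condMean P Y {ω | A ω = k ∧ W ω = w ∧ E ω = e})
    -- (Extra) extrapolation of outcome mechanism among the treated
    (hExtra : ∀ (w : 𝓦) (e : ℰ), 0 < P {ω | A ω = k ∧ W ω = w ∧ E ω = e ∧ V ω = 1} →
      condMean P Y {ω | A ω = k ∧ W ω = w ∧ E ω = e ∧ V ω = 1} =
        condMean P Y {ω | A ω = k ∧ W ω = w ∧ E ω = e})
    :
    ∫ ω, Yk ω ∂P =
      ∑ w : 𝓦, ∑ e : ℰ,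
        if 0 < P {ω | W ω = w ∧ E ω = e} then
          condMean P Y {ω | A ω = k ∧ W ω = w ∧ E ω = e ∧ V ω = 1} *
            (P {ω | W ω = w ∧ E ω = e}).toReal
        else 0 := by
  classical
  have hBmeas : ∀ (w : 𝓦) (e : ℰ), MeasurableSet {ω | W ω = w ∧ E ω = e} := fun w e =>
    (hW (measurableSet_singleton w)).inter (hE (measurableSet_singleton e))
  have hdecomp : ∀ ω, Yk ω =
      ∑ w : 𝓦, ∑ e : ℰ, ({ω | W ω = w ∧ E ω = e} : Set Ω).indicator Yk ω := by
    intro ω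
    simp [Set.indicator_apply, Set.mem_setOf_eq, ite_and, Finset.sum_ite_eq]
  calc ∫ ω, Yk ω ∂P
      = ∫ ω, ∑ w : 𝓦, ∑ e : ℰ, ({ω | W ω = w ∧ E ω = e} : Set Ω).indicator Yk ω ∂P :=
        integral_congr_ae (Filter.Eventually.of_forall hdecomp)
    _ = ∑ w : 𝓦, ∑ e : ℰ, ∫ ω, ({ω | W ω = w ∧ E ω = e} : Set Ω).indicator Yk ω ∂P := by
        rw [integral_finset_sum _ fun w _ =>
          integrable_finset_sum _ fun e _ => hYk.indicator (hBmeas w e)]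
        exact Finset.sum_congr rfl fun w _ =>
          integral_finset_sum _ fun e _ => hYk.indicator (hBmeas w e)
    _ = _ := by
        refine Finset.sum_congr rfl fun w _ => Finset.sum_congr rfl fun e _ => ?_
        by_cases hpos : 0 < P {ω | W ω = w ∧ E ω = e}
        · rw [if_pos hpos]
          have hPD := hPkall w e hpos
          have hPC : 0 < P {ω | A ω = k ∧ W ω = w ∧ E ω = e} :=
            lt_of_lt_of_le hPD (measure_mono fun ω h => ⟨h.1, h.2.1, h.2.2.1⟩)
          have hchain : condMean P Yk {ω | W ω = w ∧ E ω = e} =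
              condMean P Y {ω | A ω = k ∧ W ω = w ∧ E ω = e ∧ V ω = 1} := by
            rw [hIkall w e hPC, hCkall w e hPC, hExtra w e hPD]
          rw [← hchain]
          have hne : (P {ω | W ω = w ∧ E ω = e}).toReal ≠ 0 := by
            rw [ENNReal.toReal_ne_zero]
            exact ⟨hpos.ne', (measure_lt_top P _).ne⟩
          rw [condMean, div_mul_cancel₀ _ hne]
        · rw [if_neg hpos]
          have h0 : P {ω | W ω = w ∧ E ω = e} = 0 := le_antisymm (not_lt.mp hpos) zero_le
          rw [integral_indicator (hBmeas w e), Measure.restrict_eq_zero.mpr h0,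
            integral_zero_measure]
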